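/- Let I, J : ℤIrr(B) → ℤIrr(B') be perfect isometries between p-blocks such that I(χ) = ±J(χ) for every χ ∈ Irr(B). Then I = J or I = −J; i.e., the sign is uniform. -/

import Mathlib

open scoped BigOperators
open Finset

noncomputable section

/-- `χ : G → ℂ` is an irreducible complex character of the finite group `G`. -/
def IsIrrChar (G : Type) [Group G] [Fintype G] (χ : G → ℂ) : Prop :=
  ∃ V : FDRep ℂ G, CategoryTheory.Simple V ∧ χ = V.character

/-- An element is `p`-regular if `p` does not divide its order. -/
def pRegular (p : ℕ) {G : Type} [Monoid G] (g : G) : Prop :=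
  ¬ p ∣ orderOf g

/-- The `p`-part of a natural number. -/
def pPart (p n : ℕ) : ℕ := p ^ (n.factorization p)

/-- The `p`-part of the order of the centralizer of `g`. -/
def centOrderP (p : ℕ) {G : Type} [Group G] (g : G) : ℕ :=
  pPart p (Nat.card (Subgroup.centralizer ({g} : Set G)))

/-- The usual inner product of class functions on a finite group. -/
def innerChar (G : Type) [Group G] [Fintype G] (χ ψ : G → ℂ) : ℂ :=
  (Fintype.card G : ℂ)⁻¹ * ∑ g : G, χ g * ψ g⁻¹

/-- The group `ℤIrr(B)` of generalized characters of a block `B`, realized as the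
`ℤ`-span of the characters in `B` inside the functions `G → ℂ`. -/
def ZIrr {G : Type} [Group G] [Fintype G] (B : Finset (G → ℂ)) : Submodule ℤ (G → ℂ) :=
  Submodule.span ℤ (B : Set (G → ℂ))

/-- A character `χ ∈ B` viewed as an element of `ℤIrr(B)`. -/
def elt {G : Type} [Group G] [Fintype G] {B : Finset (G → ℂ)} (χ : G → ℂ) (h : χ ∈ B) :
    ZIrr B :=
  ⟨χ, Submodule.subset_span (Finset.mem_coe.mpr h)⟩

/-- Broué's function `μ_I(g,h) = ∑_{χ ∈ Irr(B)} χ(g)·I(χ)(h)`. -/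
def muI {G H : Type} [Group G] [Fintype G] [Group H] [Fintype H]
    {B : Finset (G → ℂ)} {B' : Finset (H → ℂ)}
    (I : ZIrr B →ₗ[ℤ] ZIrr B') (g : G) (h : H) : ℂ :=
  ∑ χ ∈ B.attach, χ.1 g * ((I (elt χ.1 χ.2) : ZIrr B') : H → ℂ) h

/-- Broué's notion of a perfect isometry: an inner-product preserving `ℤ`-linear
bijection `ℤIrr(B) → ℤIrr(B')` satisfying the separation condition (sep) and the
integrality condition (int). -/
def IsPerfIso (p : ℕ) {G H : Type} [Group G] [Fintype G] [Group H] [Fintype H]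
    (B : Finset (G → ℂ)) (B' : Finset (H → ℂ)) (I : ZIrr B ≃ₗ[ℤ] ZIrr B') : Prop :=
  (∀ x y : ZIrr B,
      innerChar H (I x : H → ℂ) (I y : H → ℂ) = innerChar G (x : G → ℂ) (y : G → ℂ)) ∧
  (∀ (g : G) (h : H), Xor' (pRegular p g) (pRegular p h) → muI I.toLinearMap g h = 0) ∧
  (∀ (g : G) (h : H), IsIntegral ℤ (muI I.toLinearMap g h / (centOrderP p g : ℂ)) ∧
      IsIntegral ℤ (muI I.toLinearMap g h / (centOrderP p h : ℂ)))

/-- By Osima's theorem, `B` is a union of `p`-blocks iff it consists of irreducible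
characters and satisfies block orthogonality between `p`-regular and `p`-singular
columns. -/
def IsBlockUnion (p : ℕ) (G : Type) [Group G] [Fintype G] (B : Finset (G → ℂ)) : Prop :=
  (∀ χ ∈ B, IsIrrChar G χ) ∧
  ∀ g h : G, pRegular p g → ¬ pRegular p h → ∑ χ ∈ B, χ g * χ h = 0

/-- A `p`-block of `G`: a minimal nonempty union of blocks. -/
def IsBlock (p : ℕ) (G : Type) [Group G] [Fintype G] (B : Finset (G → ℂ)) : Prop :=
  IsBlockUnion p G B ∧ B.Nonempty ∧
    ∀ C ⊆ B, IsBlockUnion p G C → C = ∅ ∨ C = B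

/-- Orthonormality of irreducible characters. -/
lemma innerChar_orthonormal {G : Type} [Group G] [Fintype G] {χ ψ : G → ℂ}
    (hχ : IsIrrChar G χ) (hψ : IsIrrChar G ψ) :
    innerChar G χ ψ = if χ = ψ then 1 else 0 := by
  classical
  obtain ⟨V, hV, rfl⟩ := hχ
  obtain ⟨W, hW, rfl⟩ := hψ
  letI : Fintype G := ‹Fintype G›
  letI : Invertible (Nat.card G : ℂ) :=
    invertibleOfNonzero (Nat.cast_ne_zero.mpr Nat.card_pos.ne')
  haveI := hV
  haveI := hW
  by_cases h : V.character = W.character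
  · rw [if_pos h, innerChar, ← h]
    have := FDRep.char_orthonormal (k := ℂ) (G := G) V V
    rw [if_pos ⟨CategoryTheory.Iso.refl V⟩] at this
    rw [Fintype.card_eq_nat_card]
    exact this
  · rw [if_neg h, innerChar]
    have := FDRep.char_orthonormal (k := ℂ) (G := G) V W
    rw [if_neg (fun ⟨i⟩ => h (FDRep.char_iso i))] at this
    rw [Fintype.card_eq_nat_card]
    exact this

/-- Uniqueness of signs: if two perfect isometries agree up to sign on every
irreducible character of `B`, then they agree up to one global sign: `I = J` or
`I = -J`. -/
theorem perfect_isometry_sign_unique (p : ℕ) [Fact p.Prime]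
    (G H : Type) [Group G] [Fintype G] [Group H] [Fintype H]
    (B : Finset (G → ℂ)) (B' : Finset (H → ℂ))
    (hB : IsBlock p G B) (hB' : IsBlock p H B')
    (I J : ZIrr B ≃ₗ[ℤ] ZIrr B')
    (hI : IsPerfIso p B B' I) (hJ : IsPerfIso p B B' J)
    (hsign : ∀ χ (hχ : χ ∈ B),
      I (elt χ hχ) = J (elt χ hχ) ∨ I (elt χ hχ) = -(J (elt χ hχ))) :
    (∀ x : ZIrr B, I x = J x) ∨ (∀ x : ZIrr B, I x = -(J x)) := by
  classical
  haveI : DecidableEq ↥(ZIrr B') := Classical.decEq _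
  set d : G → H → ℂ := fun g h => muI I.toLinearMap g h - muI J.toLinearMap g h with hd_def
  set S : Finset {x // x ∈ B} :=
    B.attach.filter (fun x => ¬ I (elt x.1 x.2) = J (elt x.1 x.2)) with hS_def
  -- d expressed as a sum over S
  have hd : ∀ (g : G) (h : H), d g h =
      ∑ x ∈ S, x.1 g * (-2 * ((J (elt x.1 x.2) : ZIrr B') : H → ℂ) h) := by
    intro g h
    have h1 : d g h = ∑ x ∈ B.attach, x.1 g *
        (((I (elt x.1 x.2) : ZIrr B') : H → ℂ) h - ((J (elt x.1 x.2) : ZIrr B') : H → ℂ) h) := by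
      simp only [hd_def, muI, LinearEquiv.coe_coe, ← Finset.sum_sub_distrib, mul_sub]
    have hSsub : S ⊆ B.attach := Finset.filter_subset _ _
    have hzero' : ∀ x ∈ B.attach, x ∉ S → x.1 g *
        (((I (elt x.1 x.2) : ZIrr B') : H → ℂ) h - ((J (elt x.1 x.2) : ZIrr B') : H → ℂ) h)
          = 0 := by
      intro x _ hx
      have : I (elt x.1 x.2) = J (elt x.1 x.2) :=
        not_not.mp (fun hn => hx (Finset.mem_filter.mpr ⟨Finset.mem_attach _ _, hn⟩))
      rw [this, sub_self, mul_zero]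
    rw [h1, ← Finset.sum_subset hSsub hzero']
    refine Finset.sum_congr rfl fun x hx => ?_
    have hne := (Finset.mem_filter.mp hx).2
    rcases hsign x.1 x.2 with he | he
    · exact absurd he hne
    · have h2 : ((I (elt x.1 x.2) : ZIrr B') : H → ℂ) h
          = -(((J (elt x.1 x.2) : ZIrr B') : H → ℂ) h) := by
        rw [he]; simp
      rw [h2]; ring
  -- d vanishes when exactly one argument is regular
  have hdzero : ∀ (g : G) (h : H), Xor' (pRegular p g) (pRegular p h) → d g h = 0 := by
    intro g h hx
    simp only [hd_def]
    rw [hI.2.1 g h hx, hJ.2.1 g h hx, sub_zero]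
  -- orthonormality of the images under J
  have hcardH : (Fintype.card H : ℂ) ≠ 0 := Nat.cast_ne_zero.mpr Fintype.card_ne_zero
  have hinner : ∀ x y : {χ // χ ∈ B},
      ∑ h : H, ((J (elt x.1 x.2) : ZIrr B') : H → ℂ) h * ((J (elt y.1 y.2) : ZIrr B') : H → ℂ) h⁻¹
        = if x = y then (Fintype.card H : ℂ) else 0 := by
    intro x y
    have key : innerChar H ((J (elt x.1 x.2) : ZIrr B') : H → ℂ)
        ((J (elt y.1 y.2) : ZIrr B') : H → ℂ) = if x = y then 1 else 0 := by
      rw [hJ.1 (elt x.1 x.2) (elt y.1 y.2)]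
      have h1 : ((elt x.1 x.2 : ZIrr B) : G → ℂ) = x.1 := rfl
      have h2 : ((elt y.1 y.2 : ZIrr B) : G → ℂ) = y.1 := rfl
      rw [h1, h2, innerChar_orthonormal (hB.1.1 x.1 x.2) (hB.1.1 y.1 y.2)]
      exact if_congr Subtype.ext_iff.symm rfl rfl
    have h3 := congrArg (fun z => (Fintype.card H : ℂ) * z) key
    simp only [innerChar, ← mul_assoc, mul_inv_cancel₀ hcardH, one_mul, mul_ite,
      mul_one, mul_zero] at h3
    exact h3
  -- block orthogonality for the "minus" part
  have horth : ∀ g g' : G, pRegular p g → ¬ pRegular p g' →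
      ∑ x ∈ S, x.1 g * x.1 g' = 0 := by
    intro g g' hg hg'
    have hzero : ∑ h : H, d g h * d g' h⁻¹ = 0 := by
      apply Finset.sum_eq_zero
      intro h _
      by_cases hh : pRegular p h
      · have hreg : pRegular p h⁻¹ := by simpa [pRegular, orderOf_inv] using hh
        rw [hdzero g' h⁻¹ (Or.inr ⟨hreg, hg'⟩), mul_zero]
      · rw [hdzero g h (Or.inl ⟨hg, hh⟩), zero_mul]
    have hexp : ∑ h : H, d g h * d g' h⁻¹
        = (4 * (Fintype.card H : ℂ)) * ∑ x ∈ S, x.1 g * x.1 g' := by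
      calc ∑ h : H, d g h * d g' h⁻¹
          = ∑ h : H, ∑ x ∈ S, ∑ y ∈ S,
              (x.1 g * (-2 * ((J (elt x.1 x.2) : ZIrr B') : H → ℂ) h)) *
              (y.1 g' * (-2 * ((J (elt y.1 y.2) : ZIrr B') : H → ℂ) h⁻¹)) := by
            refine Finset.sum_congr rfl fun h _ => ?_
            rw [hd g h, hd g' h⁻¹, Finset.sum_mul_sum]
        _ = ∑ x ∈ S, ∑ y ∈ S, ∑ h : H,
              (x.1 g * (-2 * ((J (elt x.1 x.2) : ZIrr B') : H → ℂ) h)) *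
              (y.1 g' * (-2 * ((J (elt y.1 y.2) : ZIrr B') : H → ℂ) h⁻¹)) := by
            rw [Finset.sum_comm]
            exact Finset.sum_congr rfl fun x _ => Finset.sum_comm
        _ = ∑ x ∈ S, ∑ y ∈ S, (4 * (x.1 g * y.1 g')) *
              ∑ h : H, ((J (elt x.1 x.2) : ZIrr B') : H → ℂ) h *
                ((J (elt y.1 y.2) : ZIrr B') : H → ℂ) h⁻¹ := by
            refine Finset.sum_congr rfl fun x _ => Finset.sum_congr rfl fun y _ => ?_
            rw [Finset.mul_sum]
            exact Finset.sum_congr rfl fun h _ => by ring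
        _ = ∑ x ∈ S, (4 * (x.1 g * x.1 g')) * (Fintype.card H : ℂ) := by
            refine Finset.sum_congr rfl fun x hx => ?_
            rw [Finset.sum_congr rfl fun y (_ : y ∈ S) => by rw [hinner x y]]
            simp only [mul_ite, mul_zero]
            rw [Finset.sum_ite_eq S x (fun y => 4 * (x.1 g * y.1 g') * (Fintype.card H : ℂ))]
            rw [if_pos hx]
        _ = (4 * (Fintype.card H : ℂ)) * ∑ x ∈ S, x.1 g * x.1 g' := by
            rw [Finset.mul_sum]
            exact Finset.sum_congr rfl fun x _ => by ring
    have h4 : (4 * (Fintype.card H : ℂ)) * ∑ x ∈ S, x.1 g * x.1 g' = 0 := by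
      rw [← hexp]; exact hzero
    rcases mul_eq_zero.mp h4 with h | h
    · exact absurd h (mul_ne_zero (by norm_num) hcardH)
    · exact h
  -- S.image val is a block union contained in B
  have hsub : S.image (fun x => x.1) ⊆ B := by
    intro χ hχ
    obtain ⟨x, _, rfl⟩ := Finset.mem_image.mp hχ
    exact x.2
  have hBU : IsBlockUnion p G (S.image (fun x => x.1)) := by
    constructor
    · intro χ hχ; exact hB.1.1 χ (hsub hχ)
    · intro g g' hg hg'
      rw [Finset.sum_image (fun a _ b _ hab => Subtype.ext hab)]
      exact horth g g' hg hg'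
  rcases hB.2.2 _ hsub hBU with hemp | hfull
  · -- S is empty: I = J
    have hS : S = ∅ := Finset.image_eq_empty.mp hemp
    have hall : ∀ χ (hχ : χ ∈ B), I (elt χ hχ) = J (elt χ hχ) := by
      intro χ hχ
      by_contra hne
      have hmem : (⟨χ, hχ⟩ : {x // x ∈ B}) ∈ S :=
        Finset.mem_filter.mpr ⟨Finset.mem_attach _ _, hne⟩
      rw [hS] at hmem
      exact absurd hmem (Finset.notMem_empty _)
    left
    have main : ∀ v (hv : v ∈ ZIrr B), I ⟨v, hv⟩ = J ⟨v, hv⟩ := by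
      intro v hv
      induction hv using Submodule.span_induction with
      | mem w hw => exact hall w hw
      | zero => show I 0 = J 0; rw [I.map_zero, J.map_zero]
      | add a b ha hb iha ihb =>
          show I (⟨a, ha⟩ + ⟨b, hb⟩) = J (⟨a, ha⟩ + ⟨b, hb⟩)
          rw [I.map_add, J.map_add, iha, ihb]
      | smul c a ha ih =>
          show I (c • ⟨a, ha⟩) = J (c • ⟨a, ha⟩)
          rw [I.map_smul, J.map_smul, ih]
    intro x
    exact main x.1 x.2
  · -- S is everything: I = -J
    have hall : ∀ χ (hχ : χ ∈ B), I (elt χ hχ) = -(J (elt χ hχ)) := by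
      intro χ hχ
      have hmem : χ ∈ S.image (fun x => x.1) := by rw [hfull]; exact hχ
      obtain ⟨x, hxS, hx1⟩ := Finset.mem_image.mp hmem
      have hne := (Finset.mem_filter.mp hxS).2
      have hx : elt x.1 x.2 = elt χ hχ := Subtype.ext hx1
      rcases hsign x.1 x.2 with h | h
      · exact absurd h hne
      · rw [hx] at h; exact h
    right
    have main : ∀ v (hv : v ∈ ZIrr B), I ⟨v, hv⟩ = -(J ⟨v, hv⟩) := by
      intro v hv
      induction hv using Submodule.span_induction with
      | mem w hw => exact hall w hw
      | zero => show I 0 = -(J 0); rw [I.map_zero, J.map_zero, neg_zero]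
      | add a b ha hb iha ihb =>
          show I (⟨a, ha⟩ + ⟨b, hb⟩) = -(J (⟨a, ha⟩ + ⟨b, hb⟩))
          rw [I.map_add, J.map_add, iha, ihb, neg_add]
      | smul c a ha ih =>
          show I (c • ⟨a, ha⟩) = -(J (c • ⟨a, ha⟩))
          rw [I.map_smul, J.map_smul, ih, smul_neg]
    intro x
    exact main x.1 x.2

end
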